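/- Define φ(f₀, f₁) = ∫_ℝ x·f₀(−x)·f₁(x) dx for Schwartz functions on ℝ, and let * denote convolution, (f*g)(x) = ∫_ℝ f(y)g(x−y) dy. Then φ is a Hochschild cocycle for the convolution algebra: for all Schwartz functions f₀, f₁, f₂, φ(f₀*f₁, f₂) − φ(f₀, f₁*f₂) + φ(f₂*f₀, f₁) = 0. -/

import Mathlib

open MeasureTheory

/-- Convolution of functions on `ℝ`. -/
noncomputable def conv7 (f g : ℝ → ℂ) : ℝ → ℂ := fun x => ∫ y : ℝ, f y * g (x - y)

/-- The cochain `φ(f₀,f₁) = ∫ x f₀(-x) f₁(x) dx`. -/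
noncomputable def phi7 (f g : ℝ → ℂ) : ℂ := ∫ x : ℝ, (x : ℂ) * f (-x) * g x

private lemma xint7 (f : SchwartzMap ℝ ℂ) : Integrable (fun x : ℝ => (x : ℂ) * f x) := by
  refine (f.integrable_pow_mul volume 1).mono' ?_ ?_
  · exact (Complex.continuous_ofReal.mul f.continuous).aestronglyMeasurable
  · filter_upwards with x
    simp [norm_mul]

private lemma bdd7 (f : SchwartzMap ℝ ℂ) : ∃ C, ∀ x : ℝ, ‖f x‖ ≤ C := by
  obtain ⟨C, -, hC⟩ := f.decay 0 0
  exact ⟨C, fun x => by simpa using hC x⟩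

private lemma key2a (f g h : SchwartzMap ℝ ℂ) :
    Integrable (fun p : ℝ × ℝ => (p.1 : ℂ) * f p.1 * g p.2 * h (-p.1 - p.2))
      (volume.prod volume) := by
  have h1 : Integrable (fun p : ℝ × ℝ => ((p.1 : ℂ) * f p.1) * g p.2) (volume.prod volume) :=
    (xint7 f).mul_prod g.integrable
  have h2 : Integrable (fun p : ℝ × ℝ =>
      h (-p.1 - p.2) * (((p.1 : ℂ) * f p.1) * g p.2)) (volume.prod volume) := by
    obtain ⟨C, hCb⟩ := bdd7 h
    refine h1.bdd_mul ?_ (Filter.Eventually.of_forall fun p => hCb _)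
    exact (h.continuous.comp
      ((continuous_fst.neg).sub continuous_snd)).aestronglyMeasurable
  exact h2.congr (Filter.Eventually.of_forall fun p => by ring)

private lemma key2b (f g h : SchwartzMap ℝ ℂ) :
    Integrable (fun p : ℝ × ℝ => f p.1 * ((p.2 : ℂ) * g p.2) * h (-p.1 - p.2))
      (volume.prod volume) := by
  have h1 : Integrable (fun p : ℝ × ℝ => f p.1 * ((p.2 : ℂ) * g p.2)) (volume.prod volume) :=
    f.integrable.mul_prod (xint7 g)
  have h2 : Integrable (fun p : ℝ × ℝ =>
      h (-p.1 - p.2) * (f p.1 * ((p.2 : ℂ) * g p.2))) (volume.prod volume) := by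
    obtain ⟨C, hCb⟩ := bdd7 h
    refine h1.bdd_mul ?_ (Filter.Eventually.of_forall fun p => hCb _)
    exact (h.continuous.comp
      ((continuous_fst.neg).sub continuous_snd)).aestronglyMeasurable
  exact h2.congr (Filter.Eventually.of_forall fun p => by ring)

private lemma slice0 (g h : SchwartzMap ℝ ℂ) (u : ℝ) :
    Integrable (fun v : ℝ => g v * h (-u - v)) := by
  have h2 : Integrable (fun v : ℝ => h (-u - v) * g v) := by
    obtain ⟨C, hCb⟩ := bdd7 h
    refine (g.integrable (μ := volume)).bdd_mul ?_ (Filter.Eventually.of_forall fun v => hCb _)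
    exact (h.continuous.comp ((continuous_const).sub continuous_id)).aestronglyMeasurable
  exact h2.congr (Filter.Eventually.of_forall fun v => by ring)

private lemma slice1 (g h : SchwartzMap ℝ ℂ) (u : ℝ) :
    Integrable (fun v : ℝ => (v : ℂ) * g v * h (-u - v)) := by
  have h2 : Integrable (fun v : ℝ => h (-u - v) * ((v : ℂ) * g v)) := by
    obtain ⟨C, hCb⟩ := bdd7 h
    refine (xint7 g).bdd_mul ?_ (Filter.Eventually.of_forall fun v => hCb _)
    exact (h.continuous.comp ((continuous_const).sub continuous_id)).aestronglyMeasurable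
  exact h2.congr (Filter.Eventually.of_forall fun v => by ring)

/-- `φ` is a Hochschild cocycle for the convolution algebra of Schwartz functions:
`φ(f₀*f₁, f₂) - φ(f₀, f₁*f₂) + φ(f₂*f₀, f₁) = 0`. -/
theorem stmt7 (f₀ f₁ f₂ : SchwartzMap ℝ ℂ) :
    phi7 (conv7 f₀ f₁) f₂ - phi7 f₀ (conv7 f₁ f₂) + phi7 (conv7 f₂ f₀) f₁ = 0 := by
  have hA : phi7 (conv7 f₀ f₁) f₂
      = ∫ u : ℝ, ∫ v : ℝ, ((-(u:ℂ) - v) * f₂ (-u - v)) * f₀ u * f₁ v := by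
    simp only [phi7, conv7]
    have step1 : ∀ x : ℝ, (x : ℂ) * (∫ y : ℝ, f₀ y * f₁ (-x - y)) * f₂ x
        = ∫ y : ℝ, (x : ℂ) * (f₀ y * f₁ (-x - y)) * f₂ x := by
      intro x
      rw [← integral_const_mul, ← integral_mul_const]
    simp_rw [step1]
    rw [integral_integral_swap]
    · congr 1; funext u
      rw [← integral_sub_left_eq_self
        (fun x : ℝ => (x : ℂ) * (f₀ u * f₁ (-x - u)) * f₂ x) volume (-u)]
      congr 1; funext v
      have harg : -(-u - v) - u = v := by ring
      have harg2 : ((-u - v : ℝ) : ℂ) = -(u:ℂ) - v := by push_cast; ring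
      simp only [harg, harg2]
      ring
    · refine ((key2a f₂ f₀ f₁).congr (Filter.Eventually.of_forall fun p => ?_))
      simp only [Function.uncurry]
      ring
  have hB : phi7 f₀ (conv7 f₁ f₂)
      = ∫ u : ℝ, ∫ v : ℝ, (-(u:ℂ) * f₂ (-u - v)) * f₀ u * f₁ v := by
    simp only [phi7, conv7]
    rw [← integral_neg_eq_self
      (fun x : ℝ => (x : ℂ) * f₀ (-x) * ∫ y : ℝ, f₁ y * f₂ (x - y)) volume]
    congr 1; funext u
    simp only [neg_neg]
    have harg2 : ((-u : ℝ) : ℂ) = -(u:ℂ) := by push_cast; ring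
    have harg3 : ∀ y : ℝ, (-u : ℝ) - y = -u - y := fun _ => rfl
    rw [harg2, mul_assoc, ← integral_const_mul, ← integral_const_mul]
    congr 1; funext v
    ring
  have hC : phi7 (conv7 f₂ f₀) f₁
      = ∫ u : ℝ, ∫ v : ℝ, ((v:ℂ) * f₂ (-u - v)) * f₀ u * f₁ v := by
    simp only [phi7, conv7]
    have step1 : ∀ x : ℝ, (x : ℂ) * (∫ y : ℝ, f₂ y * f₀ (-x - y)) * f₁ x
        = ∫ u : ℝ, (x : ℂ) * (f₂ (-x - u) * f₀ u) * f₁ x := by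
      intro x
      rw [← integral_const_mul, ← integral_mul_const,
        ← integral_sub_left_eq_self
          (fun y : ℝ => (x : ℂ) * (f₂ y * f₀ (-x - y)) * f₁ x) volume (-x)]
      congr 1; funext u
      have harg : -x - (-x - u) = u := by ring
      simp only [harg]
    simp_rw [step1]
    rw [integral_integral_swap]
    · congr 1; funext u
      congr 1; funext v
      have harg : -v - u = -u - v := by ring
      rw [harg]; ring
    · refine ((key2a f₁ f₀ f₂).congr (Filter.Eventually.of_forall fun p => ?_))
      simp only [Function.uncurry]
      ring
  -- integrability of the B and C integrands on the product space
  have hBint : Integrable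
      (fun p : ℝ × ℝ => (-(p.1:ℂ) * f₂ (-p.1 - p.2)) * f₀ p.1 * f₁ p.2)
      (volume.prod volume) := by
    refine ((key2a f₀ f₁ f₂).neg).congr (Filter.Eventually.of_forall fun p => ?_)
    simp only [Pi.neg_apply]
    ring
  have hCint : Integrable
      (fun p : ℝ × ℝ => ((p.2:ℂ) * f₂ (-p.1 - p.2)) * f₀ p.1 * f₁ p.2)
      (volume.prod volume) := by
    refine (key2b f₀ f₁ f₂).congr (Filter.Eventually.of_forall fun p => ?_)
    ring
  have hIB : Integrable
      (fun u : ℝ => ∫ v : ℝ, (-(u:ℂ) * f₂ (-u - v)) * f₀ u * f₁ v) volume :=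
    hBint.integral_prod_left
  have hIC : Integrable
      (fun u : ℝ => ∫ v : ℝ, ((v:ℂ) * f₂ (-u - v)) * f₀ u * f₁ v) volume :=
    hCint.integral_prod_left
  have key : ∀ u : ℝ, (∫ v : ℝ, ((-(u:ℂ) - v) * f₂ (-u - v)) * f₀ u * f₁ v)
      = (∫ v : ℝ, (-(u:ℂ) * f₂ (-u - v)) * f₀ u * f₁ v)
        - (∫ v : ℝ, ((v:ℂ) * f₂ (-u - v)) * f₀ u * f₁ v) := by
    intro u
    have h1 : Integrable (fun v : ℝ => (-(u:ℂ) * f₂ (-u - v)) * f₀ u * f₁ v) := by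
      refine ((slice0 f₁ f₂ u).const_mul (-(u:ℂ) * f₀ u)).congr
        (Filter.Eventually.of_forall fun v => by ring)
    have h2 : Integrable (fun v : ℝ => ((v:ℂ) * f₂ (-u - v)) * f₀ u * f₁ v) := by
      refine ((slice1 f₁ f₂ u).const_mul (f₀ u)).congr
        (Filter.Eventually.of_forall fun v => by ring)
    rw [← integral_sub h1 h2]
    congr 1; funext v; ring
  rw [hA, hB, hC]
  have hfin : (∫ u : ℝ, ∫ v : ℝ, ((-(u:ℂ) - v) * f₂ (-u - v)) * f₀ u * f₁ v)
      = (∫ u : ℝ, ∫ v : ℝ, (-(u:ℂ) * f₂ (-u - v)) * f₀ u * f₁ v)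
        - (∫ u : ℝ, ∫ v : ℝ, ((v:ℂ) * f₂ (-u - v)) * f₀ u * f₁ v) := by
    simp_rw [key]
    exact integral_sub hIB hIC
  rw [hfin]
  ring
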